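/- A positive integer p is the period of some periodic orbit of a conjunctive Boolean network with strongly connected dependency graph D if and only if p divides the length of every cycle of D (equivalently, p divides the loop number p*). -/

import Mathlib

/-- A walk of length `ℓ` from `a` to `b` in the digraph with edge relation `E`. -/
def IsWalk {V : Type*} (E : V → V → Prop) (w : ℕ → V) (ℓ : ℕ) (a b : V) : Prop :=
  w 0 = a ∧ w ℓ = b ∧ ∀ i < ℓ, E (w i) (w (i + 1))

/-- A digraph is strongly connected if any vertex can reach any other by a walk. -/
def StronglyConnected {V : Type*} (E : V → V → Prop) : Prop :=
  ∀ a b : V, ∃ w ℓ, IsWalk E w ℓ a b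

/-- A cycle of length `ℓ`: a closed walk with no repeated vertices other than start/end. -/
def IsCycle {V : Type*} (E : V → V → Prop) (w : ℕ → V) (ℓ : ℕ) : Prop :=
  0 < ℓ ∧ w ℓ = w 0 ∧ (∀ i < ℓ, E (w i) (w (i + 1))) ∧
    ∀ i j, i < ℓ → j < ℓ → w i = w j → i = j

/-- `RelP E p a b` (written `a ∼ₚ b`): some walk from `a` to `b` has length divisible by `p`. -/
def RelP {V : Type*} (E : V → V → Prop) (p : ℕ) (a b : V) : Prop :=
  ∃ w ℓ, IsWalk E w ℓ a b ∧ p ∣ ℓ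

/-- The conjunctive Boolean network with in-neighbor sets `N`: coordinate `i` updates
to the AND (product over `F₂`) of the variables indexed by `N i`. -/
noncomputable def cbn {n : ℕ} (N : Fin n → Finset (Fin n)) (x : Fin n → Bool) : Fin n → Bool :=
  fun i => (N i).inf x

/-- The dependency graph of the conjunctive Boolean network: edge `j → i` iff `j ∈ N i`. -/
def depEdge {n : ℕ} (N : Fin n → Finset (Fin n)) (j i : Fin n) : Prop := j ∈ N i

section Walks

variable {V : Type*} {E : V → V → Prop}

/-- Concatenation of walks. -/
lemma walk_trans {w₁ w₂ : ℕ → V} {ℓ₁ ℓ₂ : ℕ} {a b c : V}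
    (h₁ : IsWalk E w₁ ℓ₁ a b) (h₂ : IsWalk E w₂ ℓ₂ b c) :
    ∃ w, IsWalk E w (ℓ₁ + ℓ₂) a c := by
  obtain ⟨ha, hb, he₁⟩ := h₁
  obtain ⟨hb', hc, he₂⟩ := h₂
  refine ⟨fun k => if k < ℓ₁ then w₁ k else w₂ (k - ℓ₁), ?_, ?_, ?_⟩
  · by_cases h : 0 < ℓ₁
    · simpa [h] using ha
    · have : ℓ₁ = 0 := by omega
      subst this
      simpa using hb'.trans (hb.symm.trans ha)
  · have h : ¬ (ℓ₁ + ℓ₂ < ℓ₁) := by omega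
    simp only [h, if_false]
    rw [Nat.add_sub_cancel_left]
    exact hc
  · intro i hi
    by_cases h1 : i + 1 < ℓ₁
    · have h0 : i < ℓ₁ := by omega
      simp only [h0, h1, if_true]
      exact he₁ i h0
    · by_cases h0 : i < ℓ₁
      · -- i + 1 = ℓ₁
        have hieq : i + 1 = ℓ₁ := by omega
        simp only [h0, h1, if_true, if_false]
        have : w₂ (i + 1 - ℓ₁) = w₁ (i+1) := by
          rw [hieq]; simp [hb', hb]
        rw [this]
        exact he₁ i h0
      · simp only [h0, h1, if_false]
        have hE := he₂ (i - ℓ₁) (by omega)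
        have : i + 1 - ℓ₁ = i - ℓ₁ + 1 := by omega
        rw [this]
        exact hE

/-- If `p` divides the length of every cycle, it divides the length of every closed walk. -/
lemma closed_walk_dvd (hcyc : ∀ w ℓ, IsCycle E w ℓ → p ∣ ℓ) :
    ∀ L (w : ℕ → V) a, IsWalk E w L a a → p ∣ L := by
  intro L
  induction L using Nat.strong_induction_on with
  | _ L IH =>
    intro w a hw
    obtain ⟨ha, ha', he⟩ := hw
    by_cases hinj : ∀ i j, i < L → j < L → w i = w j → i = j
    · rcases Nat.eq_zero_or_pos L with h0 | h0
      · simp [h0]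
      · exact hcyc w L ⟨h0, ha'.trans ha.symm, he, hinj⟩
    · push_neg at hinj
      obtain ⟨i, j, hi, hj, hww, hij⟩ := hinj
      -- wlog i < j
      wlog hlt : i < j generalizing i j
      · exact this j i hj hi hww.symm (Ne.symm hij) (by omega)
      -- inner closed walk of length j - i at w i
      have hinner : p ∣ (j - i) := by
        refine IH (j - i) (by omega) (fun k => w (i + k)) (w i) ⟨by simp, ?_, ?_⟩
        · show w (i + (j - i)) = w i
          have : i + (j - i) = j := by omega
          rw [this]; exact hww.symm
        · intro k hk
          show E (w (i + k)) (w (i + (k + 1)))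
          have : i + (k + 1) = i + k + 1 := by omega
          rw [this]
          exact he (i + k) (by omega)
      -- outer closed walk of length L - (j - i) at a
      have houter : p ∣ (L - (j - i)) := by
        refine IH (L - (j - i)) (by omega)
          (fun k => if k ≤ i then w k else w (k + (j - i))) a ⟨by simpa using ha, ?_, ?_⟩
        · have h1 : ¬ (L - (j - i) ≤ i) := by omega
          simp only [h1, if_false]
          have : L - (j - i) + (j - i) = L := by omega
          rw [this]; exact ha'
        · intro k hk
          by_cases h1 : k + 1 ≤ i
          · simp only [h1, show k ≤ i by omega, if_true]
            exact he k (by omega)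
          · by_cases h0 : k ≤ i
            · -- k = i
              have hkeq : k = i := by omega
              simp only [h0, h1, if_true, if_false]
              rw [hkeq]
              have hj1 : i + 1 + (j - i) = j + 1 := by omega
              rw [hj1, hww]
              exact he j (by omega)
            · simp only [h0, h1, if_false]
              have : k + 1 + (j - i) = k + (j - i) + 1 := by omega
              rw [this]
              exact he (k + (j - i)) (by omega)
      have : L = (j - i) + (L - (j - i)) := by omega
      rw [this]
      exact Nat.dvd_add hinner houter

end Walks

section Iter

variable {n : ℕ}

lemma inf_eq_true_iff (s : Finset (Fin n)) (f : Fin n → Bool) :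
    s.inf f = true ↔ ∀ j ∈ s, f j = true := by
  rw [show (true : Bool) = ⊤ from rfl, Finset.inf_eq_top_iff]

/-- The iteration formula: coordinate `i` at time `t` is true iff every coordinate that
can reach `i` by a walk of length `t` starts true. -/
lemma iterate_true_iff (N : Fin n → Finset (Fin n)) :
    ∀ (t : ℕ) (x : Fin n → Bool) (i : Fin n),
      (cbn N)^[t] x i = true ↔ ∀ j w, IsWalk (depEdge N) w t j i → x j = true := by
  intro t
  induction t with
  | zero =>
    intro x i
    simp only [Function.iterate_zero, id_eq]
    constructor
    · intro hx j w hw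
      obtain ⟨h0, h1, _⟩ := hw
      rw [← h0.symm.trans h1] at hx
      exact hx
    · intro h
      exact h i (fun _ => i) ⟨rfl, rfl, by omega⟩
  | succ t IH =>
    intro x i
    rw [Function.iterate_succ_apply']
    show (N i).inf ((cbn N)^[t] x) = true ↔ _
    rw [inf_eq_true_iff]
    constructor
    · intro h j w hw
      obtain ⟨h0, h1, he⟩ := hw
      have hk : w t ∈ N i := by
        have := he t (by omega)
        rw [h1] at this
        exact this
      have := (IH x (w t)).mp (h _ hk)
      exact this j w ⟨h0, rfl, fun s hs => he s (by omega)⟩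
    · intro h k hk
      rw [IH]
      intro j w hw
      obtain ⟨h0, h1, he⟩ := hw
      refine h j (fun s => if s = t + 1 then i else w s) ⟨by simp [h0], by simp, ?_⟩
      intro s hs
      by_cases hst : s = t
      · subst hst
        simp only [if_pos rfl, if_neg (by omega : ¬ s = s + 1)]
        rw [h1]
        exact hk
      · simp only [if_neg (show ¬ s = t + 1 by omega), if_neg (show ¬ s + 1 = t + 1 by omega)]
        exact he s (by omega)

/-- Monotone step: along a walk of length `m` from `a` to `b`,
truth at `b` after `m` steps forces truth at `a` at the start. -/
lemma walk_mono (N : Fin n → Finset (Fin n)) {w : ℕ → Fin n} {m : ℕ} {a b : Fin n}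
    (hw : IsWalk (depEdge N) w m a b) (x : Fin n → Bool)
    (h : (cbn N)^[m] x b = true) : x a = true :=
  (iterate_true_iff N m x b).mp h a w hw

/-- A periodic point is invariant under iteration by the length of any closed walk. -/
lemma closed_walk_invariant (N : Fin n → Finset (Fin n)) {x : Fin n → Bool} {q : ℕ}
    (hq : 0 < q) (hx : (cbn N)^[q] x = x) {w : ℕ → Fin n} {L : ℕ} {u : Fin n}
    (hw : IsWalk (depEdge N) w L u u) : (cbn N)^[L] x u = x u := by
  set f := cbn N with hf
  -- step: f^[s+L] x u = true → f^[s] x u = true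
  have step : ∀ y : Fin n → Bool, f^[L] y u = true → y u = true := fun y h =>
    walk_mono N hw y h
  have steps : ∀ (k : ℕ) (y : Fin n → Bool), f^[k * L] y u = true → y u = true := by
    intro k
    induction k with
    | zero => intro y h; simpa using h
    | succ k IHk =>
      intro y h
      have : f^[k * L] (f^[L] y) u = true := by
        rw [← Function.iterate_add_apply]
        have : k * L + L = (k+1) * L := by ring
        rw [this]
        exact h
      exact step y (IHk _ this)
  have hxq : ∀ k, f^[k * q] x = x := by
    intro k
    induction k with
    | zero => simp
    | succ k IHk =>
      rw [show (k+1) * q = q + k * q by ring, Function.iterate_add_apply, IHk, hx]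
  -- f^[q*L] x = x
  have hqL : f^[q * L] x = x := by
    rw [show q * L = L * q by ring]
    exact hxq L
  cases hLu : f^[L] x u with
  | true => exact (step x hLu).symm
  | false =>
    cases hxu : x u with
    | false => rfl
    | true =>
      exfalso
      have h1 : f^[q * L] x u = true := by rw [hqL]; exact hxu
      have harith : (q - 1) * L + L = q * L := by
        cases q with
        | zero => exact absurd hq (by omega)
        | succ q => simp [Nat.succ_sub_one, Nat.succ_mul]
      have h2 : f^[(q - 1) * L] (f^[L] x) u = true := by
        rw [← Function.iterate_add_apply, harith]
        exact h1
      have := steps (q - 1) (f^[L] x) h2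
      rw [hLu] at this
      exact Bool.false_ne_true this

end Iter

/-- A positive integer `p` is the period of some periodic orbit of a conjunctive
Boolean network with strongly connected dependency graph iff `p` divides the length
of every cycle of the dependency graph. -/
theorem period_iff_divides_cycles {n : ℕ} (N : Fin n → Finset (Fin n))
    (hne : ∀ i, (N i).Nonempty) (hsc : StronglyConnected (depEdge N))
    (hn : 0 < n) (p : ℕ) (hp : 0 < p) :
    (∃ x : Fin n → Bool, Function.minimalPeriod (cbn N) x = p) ↔
      ∀ w ℓ, IsCycle (depEdge N) w ℓ → p ∣ ℓ := by
  set f := cbn N with hf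
  set E := depEdge N with hE
  constructor
  · -- forward: a point with minimal period p forces p ∣ every cycle length
    rintro ⟨x, hx⟩ w ℓ hcyc
    obtain ⟨hℓpos, hclosed, hedges, _⟩ := hcyc
    have hper : Function.IsPeriodicPt f p x := by
      rw [← hx]; exact Function.isPeriodicPt_minimalPeriod f x
    have hpq : f^[p] x = x := hper
    -- show f^[ℓ] x = x
    have key : f^[ℓ] x = x := by
      funext i
      set v := w 0 with hv
      obtain ⟨w₁, a, hw₁⟩ := hsc v i
      obtain ⟨w₂, b, hw₂⟩ := hsc i v
      have hcw : IsWalk E w ℓ v v := ⟨rfl, hclosed, hedges⟩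
      -- closed walk at i of length b + a
      obtain ⟨wba, hwba⟩ := walk_trans hw₂ hw₁
      -- closed walk at i of length b + ℓ + a
      obtain ⟨wbl, hwbl⟩ := walk_trans hw₂ hcw
      obtain ⟨wbla, hwbla⟩ := walk_trans hwbl hw₁
      -- periodicity of y := f^[ℓ] x
      have hy : f^[p] (f^[ℓ] x) = f^[ℓ] x := by
        rw [← Function.iterate_add_apply, Nat.add_comm, Function.iterate_add_apply, hpq]
      have h1 : f^[b + ℓ + a] x i = x i := closed_walk_invariant N hp hpq hwbla
      have h2 : f^[b + a] (f^[ℓ] x) i = f^[ℓ] x i := closed_walk_invariant N hp hy hwba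
      have h3 : f^[b + a] (f^[ℓ] x) i = f^[b + ℓ + a] x i := by
        rw [← Function.iterate_add_apply, show b + a + ℓ = b + ℓ + a by omega]
      rw [h3, h1] at h2
      exact h2.symm
    have : Function.minimalPeriod f x ∣ ℓ :=
      Function.IsPeriodicPt.minimalPeriod_dvd key
    rwa [hx] at this
  · -- backward: construct a point of minimal period p
    intro hcyc
    have hclosed : ∀ L (w : ℕ → Fin n) a, IsWalk E w L a a → p ∣ L :=
      closed_walk_dvd hcyc
    set v₀ : Fin n := ⟨0, hn⟩ with hv₀
    -- distance function
    have hd : ∀ i : Fin n, ∃ ℓ, ∃ w, IsWalk E w ℓ v₀ i := by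
      intro i
      obtain ⟨w, ℓ, hw⟩ := hsc v₀ i
      exact ⟨ℓ, w, hw⟩
    set d : Fin n → ℕ := fun i => (hd i).choose with hdd
    have hdspec : ∀ i, ∃ w, IsWalk E w (d i) v₀ i := fun i => (hd i).choose_spec
    -- well-definedness mod p
    have hmod : ∀ (i : Fin n) (a : ℕ), (∃ w, IsWalk E w a v₀ i) → a % p = d i % p := by
      intro i a ⟨wa, hwa⟩
      obtain ⟨wi, hwi⟩ := hdspec i
      obtain ⟨wb, b, hwb⟩ := hsc i v₀
      obtain ⟨c₁, hc₁⟩ := walk_trans hwa hwb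
      obtain ⟨c₂, hc₂⟩ := walk_trans hwi hwb
      have h1 : p ∣ a + b := hclosed _ _ _ hc₁
      have h2 : p ∣ d i + b := hclosed _ _ _ hc₂
      have hmodeq : a ≡ d i [MOD p] :=
        Nat.ModEq.add_right_cancel' b
          ((Nat.modEq_zero_iff_dvd.mpr h1).trans (Nat.modEq_zero_iff_dvd.mpr h2).symm)
      exact hmodeq
    -- neighbor class relation: j ∈ N i → (d j + 1) % p = d i % p
    have hnbr : ∀ i, ∀ j ∈ N i, (d j + 1) % p = d i % p := by
      intro i j hj
      obtain ⟨wj, hwj⟩ := hdspec j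
      -- extend walk v₀ → j by edge j → i
      have : ∃ w, IsWalk E w (d j + 1) v₀ i := by
        refine ⟨fun s => if s = d j + 1 then i else wj s, by simpa using hwj.1, by simp, ?_⟩
        intro s hs
        by_cases hst : s = d j
        · subst hst
          simp only [if_neg (show ¬ d j = d j + 1 by omega), if_pos rfl]
          rw [hwj.2.1]
          exact hj
        · simp only [if_neg (show ¬ s = d j + 1 by omega),
            if_neg (show ¬ s + 1 = d j + 1 by omega)]
          exact hwj.2.2 s (by omega)
      exact hmod i (d j + 1) this
    -- the candidate point
    set x : Fin n → Bool := fun i => decide (d i % p = 0) with hxdef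
    -- the dynamics
    have hdyn : ∀ (t : ℕ) (i : Fin n), f^[t] x i = decide (d i % p = t % p) := by
      intro t
      induction t with
      | zero => intro i; simp [hxdef]; congr
      | succ t IH =>
        intro i
        rw [Function.iterate_succ_apply']
        show (N i).inf (f^[t] x) = _
        by_cases hcase : d i % p = (t + 1) % p
        · have : ∀ j ∈ N i, f^[t] x j = true := by
            intro j hj
            rw [IH j]
            have h1 := hnbr i j hj
            rw [hcase] at h1
            have : d j % p = t % p := by
              have := Nat.ModEq.add_right_cancel' 1 (h1 : d j + 1 ≡ t + 1 [MOD p])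
              exact this
            simp [this]
          rw [(inf_eq_true_iff (N i) (f^[t] x)).mpr this]
          simp [hcase]
        · obtain ⟨j, hj⟩ := hne i
          have hjf : f^[t] x j = false := by
            rw [IH j]
            have h1 := hnbr i j hj
            simp only [decide_eq_false_iff_not]
            intro hdj
            apply hcase
            rw [← h1]
            exact Nat.ModEq.add_right 1 hdj
          have hle := Finset.inf_le (f := f^[t] x) hj
          rw [hjf] at hle
          have : (N i).inf (f^[t] x) = false := le_antisymm hle (by simp)
          rw [this]
          simp [hcase]
    -- f^[p] x = x
    have hper : Function.IsPeriodicPt f p x := by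
      show f^[p] x = x
      funext i
      rw [hdyn p i, Nat.mod_self, hxdef]
    -- d v₀ ≡ 0
    have hdv₀ : d v₀ % p = 0 := by
      obtain ⟨w, hw⟩ := hdspec v₀
      have := hclosed _ _ _ hw
      omega
    -- no smaller positive period
    have hmin : ∀ r, 0 < r → r < p → f^[r] x ≠ x := by
      intro r hr hrp hcontra
      have h1 : f^[r] x v₀ = x v₀ := congrFun hcontra v₀
      rw [hdyn r v₀, hdv₀] at h1
      have h2 : x v₀ = true := by simp [hxdef, hdv₀]
      rw [h2] at h1
      simp only [decide_eq_true_eq] at h1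
      have := Nat.mod_eq_of_lt hrp
      omega
    refine ⟨x, ?_⟩
    have hdvd : Function.minimalPeriod f x ∣ p := Function.IsPeriodicPt.minimalPeriod_dvd hper
    have hpos : 0 < Function.minimalPeriod f x := by
      apply Function.IsPeriodicPt.minimalPeriod_pos hp hper
    by_contra hne'
    have hlt : Function.minimalPeriod f x < p :=
      lt_of_le_of_ne (Nat.le_of_dvd hp hdvd) hne'
    exact hmin _ hpos hlt (Function.isPeriodicPt_minimalPeriod f x)
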